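/- Let q, r, N ∈ ℕ. For each t ∈ [q], let Q_t ∈ {0,1}^{N_t × N_t} be a boolean matrix with suprank(Q_t) ≤ r, and let a_t, b_t : [N] → [N_t] be arbitrary functions. Let Γ : {0,1}^q → {0,1}, and define the boolean matrix P ∈ {0,1}^{N×N} by P(i,j) = Γ(Q_1(a_1(i), b_1(j)), …, Q_q(a_q(i), b_q(j))). Then signrank(P) ≤ (1 + r²)^q. -/

import Mathlib

open Matrix

/-- The support-rank of a boolean matrix: the minimum rank of a real matrix with
the same support. -/
noncomputable def suprank {I J : Type*} [Fintype J] (M : Matrix I J Bool) : ℕ :=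
  sInf {r : ℕ | ∃ A : Matrix I J ℝ, A.rank = r ∧
    ∀ i j, A i j = 0 ↔ M i j = false}

/-- The sign-rank of a boolean matrix: the minimum rank of a real matrix that is
positive on the 1-entries and negative on the 0-entries. -/
noncomputable def signrank {I J : Type*} [Fintype J] (M : Matrix I J Bool) : ℕ :=
  sInf {r : ℕ | ∃ A : Matrix I J ℝ, A.rank = r ∧
    ∀ i j, (M i j = true → 0 < A i j) ∧ (M i j = false → A i j < 0)}

lemma rank_le_of_decomp {I J κ : Type*} [Fintype I] [Fintype J] [Fintype κ] (A : Matrix I J ℝ)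
    (u : κ → I → ℝ) (v : κ → J → ℝ) (h : ∀ i j, A i j = ∑ k, u k i * v k j) :
    A.rank ≤ Fintype.card κ := by
  have hA : A = (Matrix.of fun i k => u k i) * (Matrix.of fun k j => v k j) := by
    ext i j; simp [Matrix.mul_apply, h]
  rw [hA]
  exact (Matrix.rank_mul_le_right _ _).trans (Matrix.rank_le_card_height _)

lemma exists_decomp {I J : Type*} [Fintype I] [Fintype J] [DecidableEq J] (A : Matrix I J ℝ) :
    ∃ (u : Fin A.rank → I → ℝ) (v : Fin A.rank → J → ℝ),
      ∀ i j, A i j = ∑ k, u k i * v k j := by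
  set W := LinearMap.range A.mulVecLin with hW
  have hr : A.rank = Module.finrank ℝ W := rfl
  let bW : Module.Basis (Fin A.rank) ℝ W := (Module.finBasis ℝ W).reindex (finCongr hr.symm)
  have hcol : ∀ j, (fun i => A i j) ∈ W := by
    intro j
    exact ⟨Pi.single j 1, by ext i; simp [Matrix.mulVecLin_apply, Matrix.mulVec, dotProduct,
      Pi.single_apply]⟩
  refine ⟨fun k i => (bW k : I → ℝ) i, fun k j => bW.repr ⟨_, hcol j⟩ k, fun i j => ?_⟩
  have h := bW.sum_repr ⟨fun i => A i j, hcol j⟩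
  have h2 := congrArg (fun (x : W) => (x : I → ℝ) i) h
  simp only [AddSubmonoidClass.coe_finset_sum, Finset.sum_apply, SetLike.val_smul,
    Pi.smul_apply, smul_eq_mul] at h2
  rw [← h2]
  exact Finset.sum_congr rfl fun k _ => mul_comm _ _

lemma rank_hadamard_le {I J : Type*} [Fintype I] [Fintype J] [DecidableEq J]
    (A B : Matrix I J ℝ) :
    (Matrix.of fun i j => A i j * B i j).rank ≤ A.rank * B.rank := by
  obtain ⟨u, v, huv⟩ := exists_decomp A
  obtain ⟨w, x, hwx⟩ := exists_decomp B
  have := rank_le_of_decomp (Matrix.of fun i j => A i j * B i j)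
    (fun (p : Fin A.rank × Fin B.rank) i => u p.1 i * w p.2 i)
    (fun p j => v p.1 j * x p.2 j) ?_
  · simpa using this
  · intro i j
    simp only [Matrix.of_apply, huv, hwx, Finset.sum_mul_sum, Fintype.sum_prod_type]
    exact Finset.sum_congr rfl fun k _ => Finset.sum_congr rfl fun l _ => by ring

lemma rank_add_le' {I J : Type*} [Fintype I] [Fintype J] (A B : Matrix I J ℝ) :
    (A + B).rank ≤ A.rank + B.rank := by
  have h : LinearMap.range (A + B).mulVecLin ≤
      LinearMap.range A.mulVecLin ⊔ LinearMap.range B.mulVecLin := by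
    rw [Matrix.mulVecLin_add]
    intro x hx
    obtain ⟨y, rfl⟩ := hx
    exact Submodule.add_mem_sup (LinearMap.mem_range_self _ y) (LinearMap.mem_range_self _ y)
  exact (Submodule.finrank_mono h).trans (Submodule.finrank_add_le_finrank_add_finrank _ _)

lemma rank_sum_le' {I J α : Type*} [Fintype I] [Fintype J] (S : Finset α)
    (M : α → Matrix I J ℝ) : (∑ s ∈ S, M s).rank ≤ ∑ s ∈ S, (M s).rank := by
  classical
  induction S using Finset.induction_on with
  | empty => simp [Matrix.rank_zero]
  | insert _ _ hs ih =>
    rw [Finset.sum_insert hs, Finset.sum_insert hs]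
    exact (rank_add_le' _ _).trans (Nat.add_le_add_left ih _)

lemma rank_smul_le' {n : ℕ} (c : ℝ) (A : Matrix (Fin n) (Fin n) ℝ) :
    (c • A).rank ≤ A.rank := by
  have h : c • A = (c • (1 : Matrix (Fin n) (Fin n) ℝ)) * A := by
    rw [Matrix.smul_mul, Matrix.one_mul]
  rw [h]
  exact Matrix.rank_mul_le_right _ _

lemma exists_pos_le_fin {α : Type*} [Fintype α] (f : α → ℝ) (hf : ∀ x, 0 < f x) :
    ∃ ε : ℝ, 0 < ε ∧ ε ≤ 1 ∧ ∀ x, ε ≤ f x := by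
  rcases isEmpty_or_nonempty α with h | h
  · exact ⟨1, one_pos, le_refl 1, fun x => (IsEmpty.false x).elim⟩
  · have hne : (Finset.univ : Finset α).Nonempty := Finset.univ_nonempty
    refine ⟨min 1 (Finset.univ.inf' hne f), ?_, min_le_left _ _,
      fun x => (min_le_right _ _).trans (Finset.inf'_le f (Finset.mem_univ x))⟩
    exact lt_min one_pos ((Finset.lt_inf'_iff hne).2 fun x _ => hf x)

lemma comb_identity (q m : ℕ) :
    ∑ s : Fin q → Bool, m ^ (Finset.univ.filter (fun t => s t = true)).card = (1 + m) ^ q := by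
  have h1 : ∀ s : Fin q → Bool,
      m ^ (Finset.univ.filter (fun t => s t = true)).card
        = ∏ t : Fin q, (if s t = true then m else 1) := by
    intro s
    rw [Finset.prod_ite, Finset.prod_const, Finset.prod_const, one_pow, mul_one]
  simp only [h1]
  have h2 := Fintype.prod_sum (R := ℕ) (ι := Fin q) (κ := fun _ => Bool)
    (f := fun _ b => if b = true then m else 1)
  rw [← h2]
  simp [Fintype.sum_bool, add_comm]

theorem stmt3 (q r N : ℕ) (Nt : Fin q → ℕ)
    (Q : ∀ t, Matrix (Fin (Nt t)) (Fin (Nt t)) Bool)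
    (hQ : ∀ t, suprank (Q t) ≤ r)
    (a b : ∀ t, Fin N → Fin (Nt t))
    (Γ : (Fin q → Bool) → Bool)
    (P : Matrix (Fin N) (Fin N) Bool)
    (hP : ∀ i j, P i j = Γ (fun t => Q t (a t i) (b t j))) :
    signrank P ≤ (1 + r ^ 2) ^ q := by
  classical
  -- Step 1: support matrices
  have hA : ∀ t, ∃ A : Matrix (Fin (Nt t)) (Fin (Nt t)) ℝ, A.rank ≤ r ∧
      ∀ i j, A i j = 0 ↔ Q t i j = false := by
    intro t
    have hne : {k : ℕ | ∃ A : Matrix (Fin (Nt t)) (Fin (Nt t)) ℝ, A.rank = k ∧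
        ∀ i j, A i j = 0 ↔ Q t i j = false}.Nonempty := by
      refine ⟨_, Matrix.of fun i j => if Q t i j then (1:ℝ) else 0, rfl, ?_⟩
      intro i j; by_cases h : Q t i j <;> simp [h]
    obtain ⟨A, h1, h2⟩ := Nat.sInf_mem hne
    exact ⟨A, h1 ▸ hQ t, h2⟩
  choose A hAr hAs using hA
  set B : Fin q → Matrix (Fin N) (Fin N) ℝ :=
    fun t => Matrix.of fun i j => (A t (a t i) (b t j)) ^ 2 with hB
  have hBnn : ∀ t i j, 0 ≤ B t i j := fun t i j => sq_nonneg _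
  have hBzero : ∀ t i j, B t i j = 0 ↔ Q t (a t i) (b t j) = false := by
    intro t i j
    simp only [hB, Matrix.of_apply, sq_eq_zero_iff]
    exact hAs t _ _
  have hBpos : ∀ t i j, Q t (a t i) (b t j) = true → 0 < B t i j := by
    intro t i j h
    rcases lt_or_eq_of_le (hBnn t i j) with h' | h'
    · exact h'
    · exact absurd ((hBzero t i j).1 h'.symm) (by simp [h])
  have hBrank : ∀ t, (B t).rank ≤ r * r := by
    intro t
    obtain ⟨u, v, huv⟩ := exists_decomp (A t)
    have hS : (Matrix.of fun i j => A t (a t i) (b t j) : Matrix (Fin N) (Fin N) ℝ).rank ≤ r := by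
      refine (rank_le_of_decomp _ (fun k i => u k (a t i)) (fun k j => v k (b t j)) ?_).trans ?_
      · intro i j; exact huv _ _
      · simpa using hAr t
    have heq : B t = Matrix.of fun i j =>
        (Matrix.of fun i j => A t (a t i) (b t j) : Matrix (Fin N) (Fin N) ℝ) i j *
        (Matrix.of fun i j => A t (a t i) (b t j) : Matrix (Fin N) (Fin N) ℝ) i j := by
      ext i j; simp [hB, sq]
    rw [heq]
    exact (rank_hadamard_le _ _).trans (Nat.mul_le_mul hS hS)
  set σ : Fin N → Fin N → (Fin q → Bool) := fun i j t => Q t (a t i) (b t j) with hσ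
  set tr : (Fin q → Bool) → Finset (Fin q) :=
    fun s => Finset.univ.filter (fun t => s t = true) with htr
  set F : (Fin q → Bool) → Matrix (Fin N) (Fin N) ℝ :=
    fun s => Matrix.of fun i j => ∏ t ∈ tr s, B t i j with hF
  have hFnn : ∀ s i j, 0 ≤ F s i j := by
    intro s i j
    simp only [hF, Matrix.of_apply]
    exact Finset.prod_nonneg fun t _ => hBnn t i j
  have hFσpos : ∀ i j, 0 < F (σ i j) i j := by
    intro i j
    simp only [hF, Matrix.of_apply]
    refine Finset.prod_pos fun t ht => hBpos t i j ?_
    simpa [htr, hσ] using ht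
  set T : Fin N → Fin N → ℝ := fun i j => ∑ s : Fin q → Bool, F s i j with hT
  have hTnn : ∀ i j, 0 ≤ T i j := fun i j => Finset.sum_nonneg fun s _ => hFnn s i j
  obtain ⟨ε, hε0, hε1, hεle⟩ := exists_pos_le_fin
    (fun p : Fin N × Fin N => F (σ p.1 p.2) p.1 p.2 / (T p.1 p.2 + 1))
    (fun p => div_pos (hFσpos p.1 p.2) (by linarith [hTnn p.1 p.2]))
  have hεT : ∀ i j, ε * T i j < F (σ i j) i j := by
    intro i j
    have h := hεle (i, j)
    have hT1 : (0:ℝ) < T i j + 1 := by linarith [hTnn i j]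
    have h2 : ε * (T i j + 1) ≤ F (σ i j) i j := by
      calc ε * (T i j + 1) ≤ (F (σ i j) i j / (T i j + 1)) * (T i j + 1) :=
            mul_le_mul_of_nonneg_right h (le_of_lt hT1)
        _ = F (σ i j) i j := div_mul_cancel₀ _ (ne_of_gt hT1)
    nlinarith
  set e : (Fin q → Bool) → ℕ := fun s => q - (tr s).card with he
  set γ : (Fin q → Bool) → ℝ := fun s => if Γ s then 1 else -1 with hγ
  set C : Matrix (Fin N) (Fin N) ℝ :=
    ∑ s : Fin q → Bool, (γ s * ε ^ e s) • F s with hC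
  have hCapp : ∀ i j, C i j = ∑ s : Fin q → Bool, (γ s * ε ^ e s) * F s i j := by
    intro i j
    rw [hC]
    simp [Matrix.sum_apply]
  -- key pointwise estimate
  have hkey : ∀ i j s, s ≠ σ i j → ε ^ e s * F s i j ≤ ε ^ (e (σ i j) + 1) * F s i j := by
    intro i j s hs
    rcases eq_or_ne (F s i j) 0 with h0 | h0
    · rw [h0]; simp
    · have hsub : tr s ⊆ tr (σ i j) := by
        intro t ht
        have hne : B t i j ≠ 0 := by
          intro hz
          apply h0
          simp only [hF, Matrix.of_apply]
          exact Finset.prod_eq_zero ht hz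
        have hq : Q t (a t i) (b t j) = true := by
          rcases Bool.eq_false_or_eq_true (Q t (a t i) (b t j)) with h | h
          · exact h
          · exact absurd ((hBzero t i j).2 h) hne
        simp [htr, hσ, hq]
      have hne' : tr s ≠ tr (σ i j) := by
        intro hEq
        apply hs
        funext t
        have h1 : s t = true ↔ σ i j t = true := by
          constructor <;> intro h
          · have hm : t ∈ tr s := by simp [htr, h]
            rw [hEq] at hm
            simpa [htr] using hm
          · have hm : t ∈ tr (σ i j) := by simp [htr, h]
            rw [← hEq] at hm
            simpa [htr] using hm
        by_cases h2 : s t <;> by_cases h3 : σ i j t <;> simp_all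
      have hlt : (tr s).card < (tr (σ i j)).card :=
        Finset.card_lt_card (lt_of_le_of_ne hsub hne')
      have hcard : (tr (σ i j)).card ≤ q := by
        have := Finset.card_filter_le (Finset.univ : Finset (Fin q))
          (fun t => σ i j t = true)
        simpa [htr] using this
      have hee : e (σ i j) + 1 ≤ e s := by
        simp only [he]
        omega
      exact mul_le_mul_of_nonneg_right
        (pow_le_pow_of_le_one (le_of_lt hε0) hε1 hee) (hFnn s i j)
  -- sign condition
  have hsign : ∀ i j, (P i j = true → 0 < C i j) ∧ (P i j = false → C i j < 0) := by
    intro i j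
    have hPσ : Γ (σ i j) = P i j := by
      rw [hσ, hP i j]
    have hγσ : γ (σ i j) = if P i j = true then 1 else -1 := by
      simp only [hγ]
      rw [hPσ]
    have hsplit : C i j = (γ (σ i j) * ε ^ e (σ i j)) * F (σ i j) i j
        + ∑ s ∈ Finset.univ.erase (σ i j), (γ s * ε ^ e s) * F s i j := by
      rw [hCapp i j, ← Finset.add_sum_erase _ _ (Finset.mem_univ (σ i j))]
    have hrest : |∑ s ∈ Finset.univ.erase (σ i j), (γ s * ε ^ e s) * F s i j|
        ≤ ε ^ (e (σ i j)) * (ε * T i j) := by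
      calc |∑ s ∈ Finset.univ.erase (σ i j), (γ s * ε ^ e s) * F s i j|
          ≤ ∑ s ∈ Finset.univ.erase (σ i j), |(γ s * ε ^ e s) * F s i j| :=
            Finset.abs_sum_le_sum_abs _ _
        _ ≤ ∑ s ∈ Finset.univ.erase (σ i j), ε ^ (e (σ i j) + 1) * F s i j := by
            refine Finset.sum_le_sum fun s hs => ?_
            have hg : |γ s| = 1 := by
              simp only [hγ]
              split <;> norm_num
            have habs : |(γ s * ε ^ e s) * F s i j| = ε ^ e s * F s i j := by
              rw [abs_mul, abs_mul, hg, one_mul, abs_of_nonneg (pow_nonneg hε0.le _),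
                abs_of_nonneg (hFnn s i j)]
            rw [habs]
            exact hkey i j s (Finset.ne_of_mem_erase hs)
        _ ≤ ∑ s : Fin q → Bool, ε ^ (e (σ i j) + 1) * F s i j :=
            Finset.sum_le_sum_of_subset_of_nonneg (Finset.erase_subset _ _)
              (fun s _ _ => mul_nonneg (pow_nonneg hε0.le _) (hFnn s i j))
        _ = ε ^ (e (σ i j)) * (ε * T i j) := by
            rw [hT, ← Finset.mul_sum, pow_succ]
            ring
    have hmain : ε ^ e (σ i j) * (ε * T i j) < ε ^ e (σ i j) * F (σ i j) i j :=
      mul_lt_mul_of_pos_left (hεT i j) (pow_pos hε0 _)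
    have habs2 := abs_lt.mp (lt_of_le_of_lt hrest hmain)
    constructor
    · intro hp
      rw [hp] at hγσ
      norm_num at hγσ
      rw [hsplit, hγσ, one_mul]
      linarith [habs2.1]
    · intro hp
      rw [hp] at hγσ
      norm_num at hγσ
      rw [hsplit, hγσ, neg_one_mul, neg_mul]
      linarith [habs2.2]
  -- rank bound
  have hCrank : C.rank ≤ (1 + r ^ 2) ^ q := by
    have hprodrank : ∀ S : Finset (Fin q),
        (Matrix.of fun i j => ∏ t ∈ S, B t i j : Matrix (Fin N) (Fin N) ℝ).rank
          ≤ (r * r) ^ S.card := by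
      intro S
      induction S using Finset.induction_on with
      | empty =>
        have h1 := rank_le_of_decomp
          (Matrix.of fun (_ _ : Fin N) => (1:ℝ)) (fun (_ : Unit) _ => 1) (fun _ _ => 1)
          (by intro i j; simp)
        simpa using h1
      | @insert x S hx ih =>
        have heq : (Matrix.of fun i j => ∏ t ∈ insert x S, B t i j
            : Matrix (Fin N) (Fin N) ℝ) =
            Matrix.of fun i j => B x i j *
              (Matrix.of fun i j => ∏ t ∈ S, B t i j : Matrix (Fin N) (Fin N) ℝ) i j := by
          ext i j
          simp [Finset.prod_insert hx]
        rw [heq, Finset.card_insert_of_notMem hx, pow_succ']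
        exact (rank_hadamard_le _ _).trans (Nat.mul_le_mul (hBrank x) ih)
    have h1 : C.rank ≤ ∑ s : Fin q → Bool, ((γ s * ε ^ e s) • F s).rank := by
      rw [hC]
      exact rank_sum_le' _ _
    have h2 : ∀ s : Fin q → Bool, ((γ s * ε ^ e s) • F s).rank ≤ (r * r) ^ (tr s).card := by
      intro s
      refine (rank_smul_le' _ _).trans ?_
      rw [hF]
      exact hprodrank (tr s)
    calc C.rank ≤ ∑ s : Fin q → Bool, (r * r) ^ (tr s).card :=
          h1.trans (Finset.sum_le_sum fun s _ => h2 s)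
      _ = (1 + r * r) ^ q := by
          simp only [htr]
          exact comb_identity q (r * r)
      _ = (1 + r ^ 2) ^ q := by rw [sq]
  have hmem : C.rank ∈ {k : ℕ | ∃ A : Matrix (Fin N) (Fin N) ℝ, A.rank = k ∧
      ∀ i j, (P i j = true → 0 < A i j) ∧ (P i j = false → A i j < 0)} := ⟨C, rfl, hsign⟩
  exact le_trans (Nat.sInf_le hmem) hCrank
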